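/- For all positive integers n, m and every nonnegative integer k, one has the binomial identity Σ_{j=0}^{k} (−1)^j · C(2n, k−j) · C(2n+m+j−1, m+j) = C(2n+m−1, m+k) · C(m+k−1, k), where C(a,b) denotes the binomial coefficient. -/

import Mathlib

lemma star_choose (N b r : ℕ) :
    (N + b + 1).choose (b + r + 1) * (b + r).choose (b + 1)
      + (N + b).choose (b + r + 1) * (b + r).choose b
    = N.choose r * (N + b).choose (b + 1) := by
  rw [Nat.choose_succ_succ (N + b) (b + r), add_mul, add_assoc, ← Nat.mul_add,
    add_comm ((b + r).choose (b + 1)) ((b + r).choose b), ← Nat.choose_succ_succ]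
  cases r with
  | zero => simp [Nat.choose_succ_self]
  | succ s =>
    rcases le_or_gt N s with hNs | hsN
    · have h1 : (N + b).choose (b + (s + 1)) = 0 := Nat.choose_eq_zero_of_lt (by omega)
      have h2 : (N + b).choose (b + (s + 1) + 1) = 0 := Nat.choose_eq_zero_of_lt (by omega)
      have h3 : N.choose (s + 1) = 0 := Nat.choose_eq_zero_of_lt (by omega)
      simp [h1, h2, h3]
    · obtain ⟨M, rfl⟩ : ∃ M, N = M + 1 := ⟨N - 1, by omega⟩
      have e1 : (M + 1 + b).choose (b + (s + 1)) * (b + (s + 1)).choose (b + 1)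
          = (M + 1 + b).choose (b + 1) * M.choose s := by
        rw [Nat.choose_mul (n := M + 1 + b) (k := b + (s + 1)) (s := b + 1) (by omega)]
        congr 2 <;> omega
      have e2 : (M + 1 + b).choose (b + (s + 1) + 1) * (b + (s + 1) + 1).choose (b + 1)
          = (M + 1 + b).choose (b + 1) * M.choose (s + 1) := by
        rcases le_or_gt (s + 1) M with h | h
        · rw [Nat.choose_mul (n := M + 1 + b) (k := b + (s + 1) + 1) (s := b + 1) (by omega)]
          congr 2 <;> omega
        · have h1 : (M + 1 + b).choose (b + (s + 1) + 1) = 0 :=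
            Nat.choose_eq_zero_of_lt (by omega)
          have h2 : M.choose (s + 1) = 0 := Nat.choose_eq_zero_of_lt h
          simp [h1, h2]
      rw [e1, e2, ← Nat.mul_add, ← Nat.choose_succ_succ, mul_comm]

lemma aux_partial (N m : ℕ) (hm : 0 < m) (k : ℕ) :
    ∀ t, t ≤ k →
    ∑ j ∈ Finset.range (t + 1),
      (-1 : ℤ) ^ j * (N.choose (k - j) : ℤ) * ((N + m - 1 + j).choose (m + j) : ℤ)
    = ((N + m - 1).choose (m + k) : ℤ) * ((m + k - 1).choose k : ℤ)
      + (-1 : ℤ) ^ t * ((N + m + t).choose (m + k) : ℤ)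
          * ((m + k - 1).choose (m + t) : ℤ) := by
  obtain ⟨b, rfl⟩ : ∃ b, m = b + 1 := ⟨m - 1, by omega⟩
  have hN : N + (b + 1) - 1 = N + b := by omega
  have hK : b + 1 + k - 1 = b + k := by omega
  simp only [hN, hK]
  intro t
  induction t with
  | zero =>
    intro _
    simp only [zero_add, Finset.sum_range_one, pow_zero, one_mul, Nat.sub_zero, add_zero]
    have h := star_choose N b k
    have h' : ((N + b + 1).choose (b + k + 1) : ℤ) * ((b + k).choose (b + 1) : ℤ)
        + ((N + b).choose (b + k + 1) : ℤ) * ((b + k).choose b : ℤ)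
        = (N.choose k : ℤ) * ((N + b).choose (b + 1) : ℤ) := by exact_mod_cast h
    have e1 : b + 1 + k = b + k + 1 := by omega
    have e2 : (b + k).choose k = (b + k).choose b := Nat.choose_symm_add.symm
    rw [e1, e2]
    have e3 : N + (b + 1) = N + b + 1 := by omega
    rw [e3]
    linarith [h']
  | succ t ih =>
    intro ht
    obtain ⟨r, rfl⟩ : ∃ r, k = t + 1 + r := ⟨k - (t + 1), by omega⟩
    rw [Finset.sum_range_succ, ih (by omega)]
    have h := star_choose N (b + t + 1) r
    have h' : ((N + (b + t + 1) + 1).choose (b + t + 1 + r + 1) : ℤ)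
          * ((b + t + 1 + r).choose (b + t + 1 + 1) : ℤ)
        + ((N + (b + t + 1)).choose (b + t + 1 + r + 1) : ℤ)
          * ((b + t + 1 + r).choose (b + t + 1) : ℤ)
        = (N.choose r : ℤ) * ((N + (b + t + 1)).choose (b + t + 1 + 1) : ℤ) := by
      exact_mod_cast h
    have e1 : t + 1 + r - (t + 1) = r := by omega
    have e2 : N + b + (t + 1) = N + (b + t + 1) := by omega
    have e3 : b + 1 + (t + 1) = b + t + 1 + 1 := by omega
    have e4 : b + 1 + (t + 1 + r) = b + t + 1 + r + 1 := by omega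
    have e5 : b + (t + 1 + r) = b + t + 1 + r := by omega
    have e6 : N + (b + 1) + t = N + (b + t + 1) := by omega
    have e7 : N + (b + 1) + (t + 1) = N + (b + t + 1) + 1 := by omega
    have e8 : b + 1 + t = b + t + 1 := by omega
    rw [e1, e2, e3, e4, e5, e6, e7, e8]
    ring_nf
    ring_nf at h'
    linear_combination ((-1 : ℤ) ^ t) * h'

/-- For all positive integers `n, m` and every nonnegative integer
`k`, one has
`∑_{j=0}^{k} (-1)^j C(2n, k-j) C(2n+m+j-1, m+j) = C(2n+m-1, m+k) C(m+k-1, k)`. -/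
theorem binomial_identity_convolution_one
    (n m : ℕ) (hn : 0 < n) (hm : 0 < m) (k : ℕ) :
    ∑ j ∈ Finset.range (k + 1),
      (-1 : ℤ) ^ j * ((2 * n).choose (k - j) : ℤ) *
        ((2 * n + m + j - 1).choose (m + j) : ℤ) =
      ((2 * n + m - 1).choose (m + k) : ℤ) * ((m + k - 1).choose k : ℤ) := by
  have hsum : ∀ j : ℕ, 2 * n + m + j - 1 = 2 * n + m - 1 + j := fun j => by omega
  simp only [hsum]
  have h := aux_partial (2 * n) m hm k k le_rfl
  have hz : (m + k - 1).choose (m + k) = 0 := Nat.choose_eq_zero_of_lt (by omega)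
  rw [h, hz]
  push_cast
  ring
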